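/- Let V be a real inner product space and let ᾱ₁, α₂, α₃, ᾱ₄, β₁, β₂, β₃, β₄ ∈ V satisfy: ⟪ᾱ₁,ᾱ₁⟫ = ⟪β₂,β₂⟫ = ⟪β₃,β₃⟫ = ⟪β₄,β₄⟫ = ⟪α₃,α₃⟫ = ⟪ᾱ₄,ᾱ₄⟫ = 2; ⟪ᾱ₁,β₂⟫ = ⟪ᾱ₁,β₃⟫ = ⟪ᾱ₁,β₄⟫ = −1, ⟪β₂,α₃⟫ = −1, ⟪β₃,ᾱ₄⟫ = −1, and all other inner products among ᾱ₁, β₂, β₃, β₄, α₃, ᾱ₄ vanish; ⟪β₂,α₂⟫ + ⟪β₃,α₂⟫ = 0 and ⟪ᾱ₁,α₂⟫ = ⟪β₄,α₂⟫ = ⟪α₃,α₂⟫ = ⟪ᾱ₄,α₂⟫ = 0; and each of ᾱ₁, β₂, β₃, β₄, α₃, ᾱ₄ is orthogonal to β₁ (the relevant Gram relations of the Carter diagram E₈(a₃)). Set α₄ := −(3ᾱ₁ + 2β₂ + 2β₃ + 2β₄ + α₃ + ᾱ₄). Then ⟪α₄,α₄⟫ = 2, ⟪α₄,β₄⟫ =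 −1, and α₄ is orthogonal to each of ᾱ₁, α₂, α₃, β₁, β₂, β₃ (the Gram relations of the Carter diagram E₈(a₂)). -/
import Mathlib


open scoped RealInnerProductSpace


theorem stmt10 {V : Type*} [NormedAddCommGroup V] [InnerProductSpace ℝ V]
    (αb₁ α₂ α₃ αb₄ β₁ β₂ β₃ β₄ : V)
    (h0 : ⟪αb₁, αb₁⟫ = 2)
    (h1 : ⟪β₂, β₂⟫ = 2)
    (h2 : ⟪β₃, β₃⟫ = 2)
    (h3 : ⟪β₄, β₄⟫ = 2)
    (h4 : ⟪α₃, α₃⟫ = 2)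
    (h5 : ⟪αb₄, αb₄⟫ = 2)
    (h6 : ⟪αb₁, β₂⟫ = -1)
    (h7 : ⟪αb₁, β₃⟫ = -1)
    (h8 : ⟪αb₁, β₄⟫ = -1)
    (h9 : ⟪β₂, α₃⟫ = -1)
    (h10 : ⟪β₃, αb₄⟫ = -1)
    (h11 : ⟪β₂, β₃⟫ = 0)
    (h12 : ⟪β₂, β₄⟫ = 0)
    (h13 : ⟪β₂, αb₄⟫ = 0)
    (h14 : ⟪β₃, β₄⟫ = 0)
    (h15 : ⟪β₃, α₃⟫ = 0)
    (h16 : ⟪β₄, α₃⟫ = 0)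
    (h17 : ⟪β₄, αb₄⟫ = 0)
    (h18 : ⟪α₃, αb₄⟫ = 0)
    (h19 : ⟪αb₁, α₃⟫ = 0)
    (h20 : ⟪αb₁, αb₄⟫ = 0)
    (h21 : ⟪β₂, α₂⟫ + ⟪β₃, α₂⟫ = 0)
    (h22 : ⟪αb₁, α₂⟫ = 0)
    (h23 : ⟪β₄, α₂⟫ = 0)
    (h24 : ⟪α₃, α₂⟫ = 0)
    (h25 : ⟪αb₄, α₂⟫ = 0)
    (h26 : ⟪αb₁, β₁⟫ = 0)
    (h27 : ⟪β₂, β₁⟫ = 0)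
    (h28 : ⟪β₃, β₁⟫ = 0)
    (h29 : ⟪β₄, β₁⟫ = 0)
    (h30 : ⟪α₃, β₁⟫ = 0)
    (h31 : ⟪αb₄, β₁⟫ = 0)
    (α₄ : V) (hdef : α₄ = -((3:ℝ) • αb₁ + (2:ℝ) • β₂ + (2:ℝ) • β₃ + (2:ℝ) • β₄ + α₃ + αb₄)) :
    ⟪α₄, α₄⟫ = 2 ∧
    ⟪α₄, β₄⟫ = -1 ∧
    ⟪α₄, αb₁⟫ = 0 ∧
    ⟪α₄, α₂⟫ = 0 ∧
    ⟪α₄, α₃⟫ = 0 ∧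
    ⟪α₄, β₁⟫ = 0 ∧
    ⟪α₄, β₂⟫ = 0 ∧
    ⟪α₄, β₃⟫ = 0 := by
  subst hdef
  have s6 : ⟪β₂, αb₁⟫ = -1 := by rw [real_inner_comm]; exact h6
  have s7 : ⟪β₃, αb₁⟫ = -1 := by rw [real_inner_comm]; exact h7
  have s8 : ⟪β₄, αb₁⟫ = -1 := by rw [real_inner_comm]; exact h8
  have s9 : ⟪α₃, β₂⟫ = -1 := by rw [real_inner_comm]; exact h9
  have s10 : ⟪αb₄, β₃⟫ = -1 := by rw [real_inner_comm]; exact h10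
  have s11 : ⟪β₃, β₂⟫ = 0 := by rw [real_inner_comm]; exact h11
  have s12 : ⟪β₄, β₂⟫ = 0 := by rw [real_inner_comm]; exact h12
  have s13 : ⟪αb₄, β₂⟫ = 0 := by rw [real_inner_comm]; exact h13
  have s14 : ⟪β₄, β₃⟫ = 0 := by rw [real_inner_comm]; exact h14
  have s15 : ⟪α₃, β₃⟫ = 0 := by rw [real_inner_comm]; exact h15
  have s16 : ⟪α₃, β₄⟫ = 0 := by rw [real_inner_comm]; exact h16
  have s17 : ⟪αb₄, β₄⟫ = 0 := by rw [real_inner_comm]; exact h17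
  have s18 : ⟪αb₄, α₃⟫ = 0 := by rw [real_inner_comm]; exact h18
  have s19 : ⟪α₃, αb₁⟫ = 0 := by rw [real_inner_comm]; exact h19
  have s20 : ⟪αb₄, αb₁⟫ = 0 := by rw [real_inner_comm]; exact h20
  refine ⟨?_, ?_, ?_, ?_, ?_, ?_, ?_, ?_⟩ <;>
    simp only [inner_neg_left, inner_neg_right, inner_add_left, inner_add_right,
      inner_smul_left, inner_smul_right, RCLike.ofReal_real_eq_id, id_eq,
      h0, h1, h2, h3, h4, h5, h6, h7, h8, h9, h10, h11, h12, h13, h14, h15, h16,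
      h17, h18, h19, h20, h22, h23, h24, h25, h26, h27, h28, h29, h30, h31,
      s6, s7, s8, s9, s10, s11, s12, s13, s14, s15, s16, s17, s18, s19, s20, conj_trivial] <;>
    linarith [h21]
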